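/- On the n-node ring graph, if α > k/n, then for every S⊆N with |S|=k, Φ^S(x⃗) > Φ^S(y⃗); hence no fixed adversary with capability k can make the all-y profile the potential maximizer. Combined with the balanced-set construction, the susceptibility of the ring to fixed intelligent adversaries equals k/n. -/

import Mathlib

open Finset

/-- Pairwise coordination payoff: `true` is action `x`, `false` is action `y`. -/
def coordPayoff (α : ℝ) : Bool → Bool → ℝ
  | true, true => 1 + α
  | false, false => 1
  | _, _ => 0

/-- Edge-based potential `Φ^S`. -/
def phi {V : Type*} [Fintype V] [DecidableEq V] (G : SimpleGraph V) [DecidableRel G.Adj]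
    (α : ℝ) (S : Finset V) (a : V → Bool) : ℝ :=
  (∑ e ∈ G.edgeFinset,
    Sym2.lift ⟨fun i j => coordPayoff α (a i) (a j),
      fun i j => by show coordPayoff α (a i) (a j) = coordPayoff α (a j) (a i); cases a i <;> cases a j <;> rfl⟩ e)
  + ∑ i ∈ S, (if a i = false then (1 : ℝ) else 0)

/-- The ring (cycle) graph on `ZMod n`. -/
def ringGraph (n : ℕ) : SimpleGraph (ZMod n) where
  Adj i j := i ≠ j ∧ (j = i + 1 ∨ i = j + 1)
  symm := by constructor; intro i j h; exact ⟨h.1.symm, h.2.symm⟩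
  loopless := by constructor; intro i h; exact h.1 rfl

instance (n : ℕ) : DecidableRel (ringGraph n).Adj :=
  fun i j => inferInstanceAs (Decidable (i ≠ j ∧ (j = i + 1 ∨ i = j + 1)))

lemma ring_edge_card {n : ℕ} [NeZero n] (hn : 3 ≤ n) :
    n ≤ (ringGraph n).edgeFinset.card := by
  have h2 : (2 : ZMod n) ≠ 0 := by
    intro h
    rw [show (2 : ZMod n) = ((2 : ℕ) : ZMod n) by push_cast; ring,
      ZMod.natCast_eq_zero_iff] at h
    exact absurd (Nat.le_of_dvd (by norm_num) h) (by omega)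
  have h1 : (1 : ZMod n) ≠ 0 := by
    intro h
    rw [show (1 : ZMod n) = ((1 : ℕ) : ZMod n) by push_cast; ring,
      ZMod.natCast_eq_zero_iff] at h
    exact absurd (Nat.le_of_dvd (by norm_num) h) (by omega)
  have key : ∀ i : ZMod n, i ≠ i + 1 := by
    intro i h
    apply h1
    linear_combination (h.symm : i + 1 = i)
  have hmem : ∀ i : ZMod n, s(i, i + 1) ∈ (ringGraph n).edgeFinset := by
    intro i
    rw [SimpleGraph.mem_edgeFinset, SimpleGraph.mem_edgeSet]
    exact ⟨key i, Or.inl rfl⟩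
  have hinj : Set.InjOn (fun i : ZMod n => s(i, i + 1)) ↑(Finset.univ : Finset (ZMod n)) := by
    intro i _ j _ h
    simp only [Sym2.eq_iff] at h
    rcases h with ⟨h, _⟩ | ⟨h1', h2'⟩
    · exact h
    · exfalso
      apply h2
      linear_combination (h2' : i + 1 = j) - (h1' : i = j + 1)
  have := Finset.card_le_card_of_injOn (fun i : ZMod n => s(i, i + 1))
    (fun i _ => hmem i) hinj
  simpa [ZMod.card] using this

theorem ring_FI_resilience {n : ℕ} [NeZero n] (hn : 3 ≤ n) (α : ℝ) (k : ℕ) (hk : k ≤ n)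
    (hα : α > (k : ℝ) / (n : ℝ)) :
    ∀ S : Finset (ZMod n), S.card = k →
      phi (ringGraph n) α S (fun _ => true) > phi (ringGraph n) α S (fun _ => false) ∧
      ¬ (∀ a : ZMod n → Bool, a ≠ (fun _ => false) →
          phi (ringGraph n) α S (fun _ => false) > phi (ringGraph n) α S a) := by
  intro S hS
  have hnpos : (0 : ℝ) < n := by positivity
  have hα' : (k : ℝ) < n * α := by
    rw [gt_iff_lt, div_lt_iff₀ hnpos] at hα
    linarith
  have hαpos : 0 < α := by
    rcases Nat.eq_zero_or_pos k with h | h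
    · rw [h] at hα; simpa using hα
    · have : (0:ℝ) < k := by exact_mod_cast h
      nlinarith
  set E := (ringGraph n).edgeFinset with hE
  have hcard : (n : ℝ) ≤ E.card := by exact_mod_cast ring_edge_card hn
  have htrue : phi (ringGraph n) α S (fun _ => true) = E.card * (1 + α) := by
    unfold phi
    have hl : ∀ e : Sym2 (ZMod n),
        Sym2.lift ⟨fun i j => coordPayoff α ((fun _ : ZMod n => true) i) ((fun _ : ZMod n => true) j),
          fun i j => rfl⟩ e = 1 + α := by
      intro e
      induction e using Sym2.inductionOn with
      | hf i j => rfl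
    simp only [hl, Finset.sum_const, nsmul_eq_mul]
    simp [hE]
  have hfalse : phi (ringGraph n) α S (fun _ => false) = E.card + k := by
    unfold phi
    have hl : ∀ e : Sym2 (ZMod n),
        Sym2.lift ⟨fun i j => coordPayoff α ((fun _ : ZMod n => false) i) ((fun _ : ZMod n => false) j),
          fun i j => rfl⟩ e = 1 := by
      intro e
      induction e using Sym2.inductionOn with
      | hf i j => rfl
    simp only [hl, Finset.sum_const, nsmul_eq_mul]
    simp [hE, hS]
  have hmain : phi (ringGraph n) α S (fun _ => true) > phi (ringGraph n) α S (fun _ => false) := by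
    rw [htrue, hfalse]
    have : (n : ℝ) * α ≤ E.card * α := by
      apply mul_le_mul_of_nonneg_right hcard hαpos.le
    nlinarith
  refine ⟨hmain, fun h => ?_⟩
  have := h (fun _ => true) (by
    intro hcontra
    have := congrFun hcontra 0
    simp at this)
  linarith
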